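/- For the Fredholm ECO-system with axiom (2) and rules (k) ↝ (2)^{k-2}(3 - [k is a power of 2])(k+1) for k ≥ 2, the generating function satisfies F(z) = (1-z)²h(z) / ((1-2z)(1-z)²h(z) - z⁴), where h(z) = ∑_{p≥1} z^{2^p}; in particular F is a rational function of z and h, and the component series satisfy F_k(z) = z^{k-3}F_3(z) for k ≥ 3. -/

import Mathlib

open PowerSeries Finset
open scoped Classical

-- peel lemma
lemma sum_peel (g : ℕ → ℕ) (n : ℕ) (hg : g (n + 3) = 0) :
    ∑ k ∈ range (n + 3), g k = g 0 + g 1 + g 2 + ∑ i ∈ range (n + 1), g (i + 3) := by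
  have h4 : ∑ k ∈ range (n + 4), g k = ∑ k ∈ range (n + 3), g k + g (n+3) :=
    sum_range_succ g (n+3)
  have h4' : ∑ k ∈ range (n + 4), g k
      = ∑ i ∈ range (n + 1), g (i + 3) + g 2 + g 1 + g 0 := by
    rw [show n + 4 = (n+3) + 1 from rfl, sum_range_succ']
    rw [show n + 3 = (n+2) + 1 from rfl, sum_range_succ']
    rw [show n + 2 = (n+1) + 1 from rfl, sum_range_succ']
  omega

lemma pow_cond (m : ℕ) : (∃ p, m + 3 = 2 ^ p) ↔ (∃ p, m + 3 = 2 ^ (p + 2)) := by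
  constructor
  · rintro ⟨p, hp⟩
    match p, hp with
    | 0, hp => omega
    | 1, hp => omega
    | (q+2), hp => exact ⟨q, hp⟩
  · rintro ⟨p, hp⟩; exact ⟨p + 2, hp⟩

section FredAux
variable (f : ℕ → ℕ → ℕ)

lemma aux_zero (h0 : ∀ k, f 0 k = if k = 2 then 1 else 0)
    (hstep : ∀ n k, 4 ≤ k → f (n + 1) k = f n (k - 1)) :
    ∀ n k, n + 3 ≤ k → f n k = 0 := by
  intro n
  induction n with
  | zero => intro k hk; rw [h0]; simp; omega
  | succ m ih =>
      intro k hk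
      rw [hstep m k (by omega)]
      exact ih (k - 1) (by omega)

lemma aux_shift (hstep : ∀ n k, 4 ≤ k → f (n + 1) k = f n (k - 1)) :
    ∀ j n, f (n + j) (j + 3) = f n 3 := by
  intro j
  induction j with
  | zero => intro n; rfl
  | succ m ih =>
      intro n
      rw [show n + (m+1) = (n + m) + 1 from rfl, hstep (n+m) (m+1+3) (by omega)]
      have : m + 1 + 3 - 1 = m + 3 := by omega
      rw [this]; exact ih n

lemma aux_shift' (hstep : ∀ n k, 4 ≤ k → f (n + 1) k = f n (k - 1)) :
    ∀ n i, i ≤ n → f n (i + 3) = f (n - i) 3 := by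
  intro n i hi
  have := aux_shift f hstep i (n - i)
  rwa [Nat.sub_add_cancel hi] at this

end FredAux

section FredMain
variable (f : ℕ → ℕ → ℕ) (t : ℕ → ℕ)
variable (h0 : ∀ k, f 0 k = if k = 2 then 1 else 0)
variable (hzero : ∀ n, f n 0 = 0 ∧ f n 1 = 0)
variable (hstep : ∀ n k, 4 ≤ k → f (n + 1) k = f n (k - 1))
variable (ht : ∀ n, t n = ∑ k ∈ Finset.range (n + 3), f n k)

/-- Σ_G n -/
noncomputable def sigG (n : ℕ) : ℕ :=
  ∑ i ∈ range (n + 1), if ∃ p, i + 3 = 2 ^ (p + 2) then f (n - i) 3 else 0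

include h0 hzero hstep ht in
lemma identI1 (n : ℕ) : t (n + 1) + f n 2 = f (n + 1) 2 + f (n + 1) 3 + t n := by
  have hz := hzero n
  have hz1 := hzero (n+1)
  have htn : t n = f n 2 + ∑ i ∈ range (n + 1), f n (i + 3) := by
    rw [ht n, sum_peel (fun k => f n k) n (aux_zero f h0 hstep n (n+3) le_rfl)]
    omega
  have htn1 : t (n+1) = f (n+1) 2 + ∑ i ∈ range (n + 1 + 1), f (n+1) (i + 3) := by
    rw [ht (n+1), show n + 1 + 3 = (n+1) + 3 from rfl,
      sum_peel (fun k => f (n+1) k) (n+1) (aux_zero f h0 hstep (n+1) (n+1+3) le_rfl)]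
    omega
  have hsplit : ∑ i ∈ range (n + 1 + 1), f (n+1) (i + 3)
      = (∑ i ∈ range (n + 1), f n (i + 3)) + f (n+1) 3 := by
    rw [sum_range_succ' (fun i => f (n+1) (i+3)) (n+1)]
    congr 1
    apply sum_congr rfl
    intro i _
    rw [hstep n (i+1+3) (by omega), show i+1+3-1 = i+3 by omega]
  omega

include h0 hzero hstep ht in
lemma identI3 (n : ℕ)
    (hstep3 : f (n + 1) 3 = f n 2 +
      ∑ k ∈ (Finset.range (n + 3)).filter (fun k => 2 ≤ k ∧ ¬ ∃ p, k = 2 ^ p), f n k) :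
    f (n + 1) 3 + sigG f n = t n := by
  classical
  have hz := hzero n
  set Q : ℕ → Prop := fun k => 2 ≤ k ∧ ¬ ∃ p, k = 2 ^ p with hQ
  have hcompl : ∑ k ∈ range (n + 3),
      (if ¬ Q k then f n k else 0) = f n 2 + sigG f n := by
    rw [sum_peel (fun k => if ¬ Q k then f n k else 0) n
      (by split
          · exact aux_zero f h0 hstep n (n+3) le_rfl
          · rfl)]
    have h0' : (if ¬ Q 0 then f n 0 else 0) = 0 := by
      rw [if_pos]; exact hz.1
      simp [hQ]
    have h1' : (if ¬ Q 1 then f n 1 else 0) = 0 := by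
      rw [if_pos]; exact hz.2
      simp [hQ]
    have h2' : (if ¬ Q 2 then f n 2 else 0) = f n 2 := by
      rw [if_pos]
      simp only [hQ, not_and, not_not]
      intro _; exact ⟨1, rfl⟩
    rw [h0', h1', h2']
    have hrest : ∑ i ∈ range (n+1), (if ¬ Q (i+3) then f n (i+3) else 0) = sigG f n := by
      apply sum_congr rfl
      intro i hi
      have hi' : i ≤ n := by
        have := mem_range.mp hi; omega
      by_cases hc : ∃ p, i + 3 = 2 ^ (p+2)
      · rw [if_pos, if_pos hc, aux_shift' f hstep n i hi']
        simp only [hQ, not_and, not_not]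
        intro _; exact (pow_cond i).mpr hc
      · rw [if_neg, if_neg hc]
        simp only [hQ, not_not]
        exact ⟨by omega, fun hcon => hc ((pow_cond i).mp hcon)⟩
    rw [hrest]
    omega
  have hfil : ∑ k ∈ (Finset.range (n + 3)).filter (fun k => Q k), f n k
      = ∑ k ∈ range (n + 3), (if Q k then f n k else 0) :=
    sum_filter _ _
  have hsum : (∑ k ∈ range (n + 3), (if Q k then f n k else 0))
      + (∑ k ∈ range (n + 3), (if ¬ Q k then f n k else 0))
      = t n := by
    rw [← sum_add_distrib, ht n]
    apply sum_congr rfl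
    intro k _
    by_cases hk : Q k
    · rw [if_pos hk, if_neg (not_not_intro hk), add_zero]
    · rw [if_neg hk, if_pos hk, zero_add]
    
  rw [hstep3, hfil]
  omega

include h0 hzero hstep in
lemma identI2 (n : ℕ)
    (hstep2 : f (n + 1) 2 = ∑ k ∈ Finset.range (n + 3),
      ((k - 2) * f n k + if ∃ p, k = 2 ^ p then f n k else 0)) :
    f (n + 1) 2 = (∑ i ∈ range (n + 1), (i + 1) * f (n - i) 3) + f n 2 + sigG f n := by
  classical
  have hz := hzero n
  have hg : (fun k => (k - 2) * f n k + if ∃ p, k = 2 ^ p then f n k else 0) (n + 3) = 0 := by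
    simp only
    rw [aux_zero f h0 hstep n (n+3) le_rfl]
    simp
  rw [hstep2, sum_peel (fun k => (k - 2) * f n k + if ∃ p, k = 2 ^ p then f n k else 0) n hg]
  have c0 : ¬ ∃ p, (0:ℕ) = 2 ^ p := by
    rintro ⟨p, hp⟩
    have := pow_pos (by norm_num : (0:ℕ) < 2) p
    omega
  have hsum : ∑ i ∈ range (n+1),
      (fun k => (k - 2) * f n k + if ∃ p, k = 2 ^ p then f n k else 0) (i + 3)
      = (∑ i ∈ range (n+1), (i + 1) * f (n - i) 3) + sigG f n := by
    rw [sigG, ← sum_add_distrib]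
    apply sum_congr rfl
    intro i hi
    have hi' : i ≤ n := by have := mem_range.mp hi; omega
    simp only
    rw [aux_shift' f hstep n i hi', show i + 3 - 2 = i + 1 by omega]
    congr 1
    by_cases hc : ∃ p, i + 3 = 2 ^ (p + 2)
    · rw [if_pos ((pow_cond i).mpr hc), if_pos hc]
    · rw [if_neg (fun hb => hc ((pow_cond i).mp hb)), if_neg hc]
  simp only at hsum ⊢
  rw [hsum, if_pos (⟨0, rfl⟩ : ∃ p, (1:ℕ) = 2 ^ p), if_pos (⟨1, rfl⟩ : ∃ p, (2:ℕ) = 2 ^ p),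
    if_neg c0]
  omega

end FredMain

lemma pow_cond1 (m : ℕ) : (∃ p, m + 3 = 2 ^ (p + 1)) ↔ (∃ p, m + 3 = 2 ^ (p + 2)) := by
  constructor
  · rintro ⟨p, hp⟩
    match p, hp with
    | 0, hp => omega
    | (q+1), hp => exact ⟨q, hp⟩
  · rintro ⟨p, hp⟩; exact ⟨p + 1, hp⟩

lemma one_sub_X_ne : (1 - X : PowerSeries ℚ) ≠ 0 := fun hcon => by
  have := congrArg (constantCoeff) hcon
  simp at this

lemma psD : ((1 : PowerSeries ℚ) - X) ^ 2 * (PowerSeries.mk fun n => ((n : ℚ) + 1)) = 1 := by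
  have key : (PowerSeries.mk fun n => ((n : ℚ) + 1))
        + X ^ 2 * (PowerSeries.mk fun n => ((n : ℚ) + 1))
      = 1 + (X * PowerSeries.mk fun n => ((n : ℚ) + 1))
        + (X * PowerSeries.mk fun n => ((n : ℚ) + 1)) := by
    ext m
    rw [map_add, map_add, map_add,
      coeff_X_pow_mul' (PowerSeries.mk fun n => ((n : ℚ) + 1)) 2 m]
    rcases m with _ | m
    · norm_num [coeff_mk]
    · rw [coeff_succ_X_mul, coeff_one, if_neg (by omega : ¬ (m + 1 = 0)), coeff_mk, coeff_mk]
      rcases m with _ | m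
      · norm_num
      · rw [if_pos (by omega : 2 ≤ m + 1 + 1), coeff_mk,
          show m + 1 + 1 - 2 = m by omega]
        push_cast
        ring
  linear_combination key

/-- the Fredholm ECO-system with axiom (2) and rules
(k) ↝ (2)^{k-2}(3 - [k is a power of 2])(k+1). With f n k the number of nodes at
level n labeled k, t n the total count, h(z) = ∑_{p≥1} z^{2^p} the Fredholm series
and F(z) = ∑ t n z^n, one has F_k(z) = z^{k-3} F_3(z) for k ≥ 3 (i.e.
f_{n+1,k+1} = f_{n,k}) and F·((1-2z)(1-z)²h - z⁴) = (1-z)²h. -/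
theorem stmt_18 (f : ℕ → ℕ → ℕ)
    (h0 : ∀ k, f 0 k = if k = 2 then 1 else 0)
    (hzero : ∀ n, f n 0 = 0 ∧ f n 1 = 0)
    (hstep2 : ∀ n, f (n + 1) 2 = ∑ k ∈ Finset.range (n + 3),
      ((k - 2) * f n k + if ∃ p, k = 2 ^ p then f n k else 0))
    (hstep3 : ∀ n, f (n + 1) 3 = f n 2 +
      ∑ k ∈ (Finset.range (n + 3)).filter (fun k => 2 ≤ k ∧ ¬ ∃ p, k = 2 ^ p), f n k)
    (hstep : ∀ n k, 4 ≤ k → f (n + 1) k = f n (k - 1))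
    (t : ℕ → ℕ) (ht : ∀ n, t n = ∑ k ∈ Finset.range (n + 3), f n k)
    (h F : PowerSeries ℚ)
    (hh : h = mk fun n => if ∃ p, n = 2 ^ (p + 1) then (1 : ℚ) else 0)
    (hF : F = mk fun n => (t n : ℚ)) :
    (∀ n k, 3 ≤ k → f (n + 1) (k + 1) = f n k) ∧
    F * ((1 - 2 * X) * (1 - X) ^ 2 * h - X ^ 4) = (1 - X) ^ 2 * h := by
  subst hh hF
  constructor
  · intro n k hk
    rw [hstep n (k + 1) (by omega)]
    simp
  set A : PowerSeries ℚ := PowerSeries.mk fun n => (f n 2 : ℚ) with hAdef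
  set B : PowerSeries ℚ := PowerSeries.mk fun n => (f n 3 : ℚ) with hBdef
  set D : PowerSeries ℚ := PowerSeries.mk fun n => ((n : ℚ) + 1) with hDdef
  set G : PowerSeries ℚ := PowerSeries.mk
    (fun n => if ∃ p, n + 3 = 2 ^ (p + 2) then (1 : ℚ) else 0) with hGdef
  set F : PowerSeries ℚ := PowerSeries.mk fun n => (t n : ℚ) with hFdef
  set h : PowerSeries ℚ := PowerSeries.mk
    (fun n => if ∃ p, n = 2 ^ (p + 1) then (1 : ℚ) else 0) with hhdef
  -- coefficient computations for products
  have hGB : ∀ n, (coeff n) (G * B) = (sigG f n : ℚ) := by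
    intro n
    rw [coeff_mul, Finset.Nat.sum_antidiagonal_eq_sum_range_succ_mk, sigG, Nat.cast_sum]
    apply sum_congr rfl
    intro i _
    rw [hGdef, hBdef]
    simp only [coeff_mk]
    rw [apply_ite (fun x : ℕ => (x : ℚ))]
    split_ifs with hc
    · rw [one_mul]
    · rw [zero_mul, Nat.cast_zero]
  have hDB : ∀ n, (coeff n) (D * B)
      = ((∑ i ∈ range (n + 1), (i + 1) * f (n - i) 3 : ℕ) : ℚ) := by
    intro n
    rw [coeff_mul, Finset.Nat.sum_antidiagonal_eq_sum_range_succ_mk, Nat.cast_sum]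
    apply sum_congr rfl
    intro i _
    rw [hDdef, hBdef]
    simp only [coeff_mk]
    push_cast
    ring
  -- the four series equations
  have e1 : F + X * A = A + B + X * F := by
    ext m
    rw [map_add, map_add, map_add]
    rcases m with _ | n
    · rw [coeff_zero_X_mul, coeff_zero_X_mul, hFdef, hAdef, hBdef]
      simp only [coeff_mk]
      rw [ht 0]
      norm_num [Finset.sum_range_succ, h0]
    · rw [coeff_succ_X_mul, coeff_succ_X_mul, hFdef, hAdef, hBdef]
      simp only [coeff_mk]
      exact_mod_cast identI1 f t h0 hzero hstep ht n
  have eB : B + X * (G * B) = X * F := by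
    ext m
    rw [map_add]
    rcases m with _ | n
    · rw [coeff_zero_X_mul, coeff_zero_X_mul, hBdef]
      simp only [coeff_mk]
      rw [h0 3]
      norm_num
    · rw [coeff_succ_X_mul, coeff_succ_X_mul, hBdef, hFdef, hGB n]
      simp only [coeff_mk]
      exact_mod_cast identI3 f t h0 hzero hstep ht n (hstep3 n)
  have eA : A = 1 + X * A + X * (D * B) + X * (G * B) := by
    ext m
    rw [map_add, map_add, map_add]
    rcases m with _ | n
    · rw [coeff_zero_X_mul, coeff_zero_X_mul, coeff_zero_X_mul, hAdef]
      simp only [coeff_mk, coeff_one]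
      rw [h0 2]
      norm_num
    · rw [coeff_succ_X_mul, coeff_succ_X_mul, coeff_succ_X_mul, hAdef, hGB n, hDB n,
        coeff_one, if_neg (Nat.succ_ne_zero n)]
      simp only [coeff_mk]
      have h2 := identI2 f h0 hzero hstep n (hstep2 n)
      rw [h2]
      push_cast
      ring
  have hpow : ∀ p : ℕ, 2 ≤ 2 ^ (p + 1) := fun p => by
    have := pow_pos (by norm_num : (0:ℕ) < 2) p
    calc 2 ≤ 2 * 2 ^ p := by omega
    _ = 2 ^ (p + 1) := by ring
  have eG : X ^ 3 * G + X ^ 2 = h := by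
    ext m
    rw [map_add, coeff_X_pow_mul' G 3 m, coeff_X_pow, hGdef, hhdef]
    simp only [coeff_mk]
    rcases m with _ | _ | _ | n
    · rw [if_neg (by omega : ¬ 3 ≤ 0), if_neg (by omega : ¬ (0:ℕ) = 2),
        if_neg (by rintro ⟨p, hp⟩; have := hpow p; omega : ¬ ∃ p, (0:ℕ) = 2 ^ (p + 1))]
      norm_num
    · rw [if_neg (by omega : ¬ 3 ≤ 1), if_neg (by omega : ¬ (1:ℕ) = 2),
        if_neg (by rintro ⟨p, hp⟩; have := hpow p; omega : ¬ ∃ p, (1:ℕ) = 2 ^ (p + 1))]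
      norm_num
    · rw [if_neg (by omega : ¬ 3 ≤ 2), if_pos rfl,
        if_pos (⟨0, rfl⟩ : ∃ p, (2:ℕ) = 2 ^ (p + 1))]
      norm_num
    · rw [if_pos (by omega : 3 ≤ n + 3), if_neg (by omega : ¬ n + 3 = 2),
        show n + 3 - 3 = n by omega, add_zero]
      by_cases hc : ∃ p, n + 3 = 2 ^ (p + 2)
      · rw [if_pos hc, if_pos ((pow_cond1 n).mpr hc)]
      · rw [if_neg hc, if_neg (fun hb => hc ((pow_cond1 n).mp hb))]
  have eD : (1 - X) ^ 2 * D = 1 := psD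
  -- algebraic combination
  have e6 : h * B = X ^ 3 * F := by linear_combination X ^ 2 * eB - B * eG
  have e5 : (1 - X) * (X * A) = (1 - X) * ((1 - X) - (1 - 4 * X + 2 * X ^ 2) * F) := by
    linear_combination ((1 - X) ^ 2) * eA + (X * B) * eD + ((1 - X) ^ 2) * eB
      + (1 - 3 * X + X ^ 2) * e1
  have e5' : X * A = (1 - X) - (1 - 4 * X + 2 * X ^ 2) * F :=
    mul_left_cancel₀ one_sub_X_ne e5
  have key : X ^ 3 * (F * ((1 - 2 * X) * (1 - X) ^ 2 * h - X ^ 4))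
      = X ^ 3 * ((1 - X) ^ 2 * h) := by
    linear_combination (X ^ 4 * h) * e1 + (X ^ 3 * (1 - X) * h) * e5' + X ^ 4 * e6
  exact mul_left_cancel₀ (pow_ne_zero 3 PowerSeries.X_ne_zero) key
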